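/- Let U₁, U₂ be twice continuously differentiable with Uᵢ' > 0 and h₁, h₂ : [0,1] → [0,1] twice continuously differentiable with hᵢ' > 0, hᵢ(0)=0, hᵢ(1)=1. Suppose -U₂''/U₂' ≥ -U₁''/U₁' everywhere and -h₂''/h₂' ≥ -h₁''/h₁' on (0,1). Then for all x₀, all ε₁ > 0, and all 0 < ε₂ ≤ min(p₀,1-p₀) with p₀ < 1, the RDU probability premia satisfy μ₂ ≥ μ₁, where μᵢ is the solution in [-ε₂, ε₂] of (hᵢ(p₀+ε₂)-hᵢ(p₀-ε₂))·Uᵢ(x₀) = (hᵢ(p₀-μᵢ)-hᵢ(p₀-ε₂))·Uᵢ(x₀-ε₁) + (hᵢ(p₀+ε₂)-hᵢ(p₀-μᵢ))·Uᵢ(x₀+ε₁). -/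

import Mathlib

open Set


/-- Deriv of a C² function is C¹. -/
lemma contDiff_one_deriv {f : ℝ → ℝ} (h : ContDiff ℝ 2 f) : ContDiff ℝ 1 (deriv f) := by
  have h2 : ContDiff ℝ ((1:ℕ)+1) f := by exact_mod_cast h
  rw [contDiff_succ_iff_deriv] at h2
  exact_mod_cast h2.2.2

/-- Key two-sided chord comparison lemma. -/
lemma key_chord (f₁ f₂ : ℝ → ℝ) (hC1 : ContDiff ℝ 2 f₁) (hC2 : ContDiff ℝ 2 f₂)
    (a b c : ℝ) (hab : a < b) (hbc : b < c)
    (hd1 : ∀ x ∈ Icc a c, 0 < deriv f₁ x) (hd2 : ∀ x ∈ Icc a c, 0 < deriv f₂ x)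
    (hidx : ∀ x ∈ Ioo a c,
      deriv (deriv f₂) x * deriv f₁ x ≤ deriv (deriv f₁) x * deriv f₂ x) :
    ∃ k > 0, k * (f₁ b - f₁ a) ≤ f₂ b - f₂ a ∧ f₂ c - f₂ b ≤ k * (f₁ c - f₁ b) := by
  have hD1 : Differentiable ℝ f₁ := hC1.differentiable (by norm_num)
  have hD2 : Differentiable ℝ f₂ := hC2.differentiable (by norm_num)
  have hd1' : Differentiable ℝ (deriv f₁) := (contDiff_one_deriv hC1).differentiable (by norm_num)
  have hd2' : Differentiable ℝ (deriv f₂) := (contDiff_one_deriv hC2).differentiable (by norm_num)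
  set r : ℝ → ℝ := fun x => deriv f₂ x / deriv f₁ x with hr
  have hrd : ∀ x ∈ Ioo a c, DifferentiableAt ℝ r x := fun x hx =>
    (hd2' x).div (hd1' x) (ne_of_gt (hd1 x (Ioo_subset_Icc_self hx)))
  have hrderiv : ∀ x ∈ Ioo a c, deriv r x ≤ 0 := by
    intro x hx
    have hne : deriv f₁ x ≠ 0 := ne_of_gt (hd1 x (Ioo_subset_Icc_self hx))
    rw [hr, deriv_fun_div (hd2' x) (hd1' x) hne]
    apply div_nonpos_of_nonpos_of_nonneg _ (sq_nonneg _)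
    have := hidx x hx
    linarith
  have hranti : AntitoneOn r (Ioo a c) := by
    apply antitoneOn_of_deriv_nonpos (convex_Ioo a c)
    · exact fun x hx => (hrd x hx).continuousAt.continuousWithinAt
    · rw [interior_Ioo]; exact fun x hx => (hrd x hx).differentiableWithinAt
    · rwa [interior_Ioo]
  have hbmem : b ∈ Ioo a c := ⟨hab, hbc⟩
  set k := r b with hk
  have hkpos : 0 < k := div_pos (hd2 b (Ioo_subset_Icc_self hbmem)) (hd1 b (Ioo_subset_Icc_self hbmem))
  refine ⟨k, hkpos, ?_, ?_⟩
  · -- monotone on [a,b] of g = f₂ - k f₁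
    have hmono : MonotoneOn (fun x => f₂ x - k * f₁ x) (Icc a b) := by
      apply monotoneOn_of_deriv_nonneg (convex_Icc a b)
      · exact (hD2.sub (hD1.const_mul k)).continuous.continuousOn
      · exact ((hD2.sub (hD1.const_mul k)).differentiableOn)
      · intro x hx
        rw [interior_Icc] at hx
        have hx' : x ∈ Ioo a c := ⟨hx.1, hx.2.trans hbc⟩
        have hrx : k ≤ r x := hranti hx' hbmem hx.2.le
        have hpos := hd1 x (Ioo_subset_Icc_self hx')
        rw [deriv_fun_sub (hD2 x) ((hD1 x).const_mul k), deriv_const_mul k (hD1 x)]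
        have : k * deriv f₁ x ≤ deriv f₂ x := by
          rw [hr] at hrx
          calc k * deriv f₁ x ≤ (deriv f₂ x / deriv f₁ x) * deriv f₁ x :=
                mul_le_mul_of_nonneg_right hrx hpos.le
            _ = deriv f₂ x := div_mul_cancel₀ _ (ne_of_gt hpos)
        linarith
    have := hmono (left_mem_Icc.mpr hab.le) (right_mem_Icc.mpr hab.le) hab.le
    simp only at this
    linarith
  · have hanti : AntitoneOn (fun x => f₂ x - k * f₁ x) (Icc b c) := by
      apply antitoneOn_of_deriv_nonpos (convex_Icc b c)
      · exact (hD2.sub (hD1.const_mul k)).continuous.continuousOn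
      · exact ((hD2.sub (hD1.const_mul k)).differentiableOn)
      · intro x hx
        rw [interior_Icc] at hx
        have hx' : x ∈ Ioo a c := ⟨hab.trans hx.1, hx.2⟩
        have hrx : r x ≤ k := hranti hbmem hx' hx.1.le
        have hpos := hd1 x (Ioo_subset_Icc_self hx')
        rw [deriv_fun_sub (hD2 x) ((hD1 x).const_mul k), deriv_const_mul k (hD1 x)]
        have : deriv f₂ x ≤ k * deriv f₁ x := by
          rw [hr] at hrx
          calc deriv f₂ x = (deriv f₂ x / deriv f₁ x) * deriv f₁ x :=
                (div_mul_cancel₀ _ (ne_of_gt hpos)).symm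
            _ ≤ k * deriv f₁ x := mul_le_mul_of_nonneg_right hrx hpos.le
        linarith
    have := hanti (left_mem_Icc.mpr hbc.le) (right_mem_Icc.mpr hbc.le) hbc.le
    simp only at this
    linarith



/-- Purely algebraic combination step. -/
lemma alg_key (a1 b1 a2 b2 A1 B1 A2 B2 kU kh : ℝ)
    (hA1 : 0 < A1) (hB1 : 0 < B1)
    (hkU : 0 < kU) (hkh : 0 < kh)
    (hbal1 : a1 * A1 = b1 * B1)
    (ha1nn : 0 ≤ a1) (hb1nn : 0 ≤ b1) (htot1 : 0 < a1 + b1)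
    (ha2l : kh * a1 ≤ a2) (hb2r : b2 ≤ kh * b1) (hb2nn : 0 ≤ b2)
    (hUl : kU * A1 ≤ A2) (hUr : B2 ≤ kU * B1) :
    b2 * B2 ≤ a2 * A2 := by
  have hb1pos : 0 < b1 := by
    rcases lt_or_eq_of_le hb1nn with h | h
    · exact h
    · exfalso
      have h0 : a1 * A1 = 0 := by rw [hbal1, ← h, zero_mul]
      have : a1 = 0 := by
        rcases mul_eq_zero.mp h0 with h' | h'
        · exact h'
        · linarith
      linarith
  have ha1pos : 0 < a1 := by nlinarith
  have ha2pos : 0 < a2 := lt_of_lt_of_le (by positivity) ha2l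
  have hcross : a1 * b2 ≤ a2 * b1 := by nlinarith
  have hstep : b2 * B1 ≤ a2 * A1 := by nlinarith
  calc b2 * B2 ≤ b2 * (kU * B1) := mul_le_mul_of_nonneg_left hUr hb2nn
    _ = kU * (b2 * B1) := by ring
    _ ≤ kU * (a2 * A1) := mul_le_mul_of_nonneg_left hstep hkU.le
    _ = a2 * (kU * A1) := by ring
    _ ≤ a2 * A2 := mul_le_mul_of_nonneg_left hUl ha2pos.le

/-- Purely algebraic final step. -/
lemma alg_final (a2 b2 a2' b2' A2 B2 : ℝ)
    (hA2 : 0 < A2) (hB2 : 0 < B2)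
    (hsum : a2 + b2 = a2' + b2')
    (hbal2 : a2' * A2 = b2' * B2)
    (hkey : b2 * B2 ≤ a2 * A2) :
    a2' ≤ a2 := by
  nlinarith [hA2, hB2]

set_option maxHeartbeats 1600000 in
/-- Global comparative risk aversion for the RDU probability premium. -/
theorem rdu_comparative_probability_premium
    (U₁ U₂ h₁ h₂ : ℝ → ℝ)
    (hUC1 : ContDiff ℝ 2 U₁) (hUC2 : ContDiff ℝ 2 U₂)
    (hUd1 : ∀ x, 0 < deriv U₁ x) (hUd2 : ∀ x, 0 < deriv U₂ x)
    (hhC1 : ContDiff ℝ 2 h₁) (hhC2 : ContDiff ℝ 2 h₂)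
    (hmap1 : MapsTo h₁ (Icc 0 1) (Icc 0 1)) (hmap2 : MapsTo h₂ (Icc 0 1) (Icc 0 1))
    (hhd1 : ∀ p ∈ Icc (0:ℝ) 1, 0 < deriv h₁ p)
    (hhd2 : ∀ p ∈ Icc (0:ℝ) 1, 0 < deriv h₂ p)
    (h10 : h₁ 0 = 0) (h11 : h₁ 1 = 1) (h20 : h₂ 0 = 0) (h21 : h₂ 1 = 1)
    (hUidx : ∀ x, -(deriv (deriv U₂) x) / deriv U₂ x ≥
      -(deriv (deriv U₁) x) / deriv U₁ x)
    (hhidx : ∀ p ∈ Ioo (0:ℝ) 1,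
      -(deriv (deriv h₂) p) / deriv h₂ p ≥ -(deriv (deriv h₁) p) / deriv h₁ p) :
    ∀ x₀ p₀ ε₁ ε₂ μ₁ μ₂ : ℝ, 0 < ε₁ → 0 < ε₂ → ε₂ ≤ min p₀ (1 - p₀) → p₀ < 1 →
      μ₁ ∈ Icc (-ε₂) ε₂ → μ₂ ∈ Icc (-ε₂) ε₂ →
      (h₁ (p₀ + ε₂) - h₁ (p₀ - ε₂)) * U₁ x₀ =
        (h₁ (p₀ - μ₁) - h₁ (p₀ - ε₂)) * U₁ (x₀ - ε₁) +
        (h₁ (p₀ + ε₂) - h₁ (p₀ - μ₁)) * U₁ (x₀ + ε₁) →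
      (h₂ (p₀ + ε₂) - h₂ (p₀ - ε₂)) * U₂ x₀ =
        (h₂ (p₀ - μ₂) - h₂ (p₀ - ε₂)) * U₂ (x₀ - ε₁) +
        (h₂ (p₀ + ε₂) - h₂ (p₀ - μ₂)) * U₂ (x₀ + ε₁) →
      μ₁ ≤ μ₂ := by
  intro x₀ p₀ ε₁ ε₂ μ₁ μ₂ hε₁ hε₂ hε₂le hp₀ hμ₁ hμ₂ hF1 hF2
  -- probability endpoints
  set pr := p₀ - ε₂ with hpr
  set ps := p₀ + ε₂ with hps
  set q := p₀ - μ₁ with hq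
  set q₂ := p₀ - μ₂ with hq₂
  have hr0 : 0 ≤ pr := by have := le_min_iff.mp hε₂le; linarith [this.1]
  have hs1 : ps ≤ 1 := by have := le_min_iff.mp hε₂le; linarith [this.2]
  have hrs : pr < ps := by simp [hpr, hps]; linarith
  have hrq : pr ≤ q := by simp [hpr, hq]; linarith [hμ₁.2]
  have hqs : q ≤ ps := by simp [hps, hq]; linarith [hμ₁.1]
  have hrq₂ : pr ≤ q₂ := by simp [hpr, hq₂]; linarith [hμ₂.2]
  have hq₂s : q₂ ≤ ps := by simp [hps, hq₂]; linarith [hμ₂.1]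
  have hprI : pr ∈ Icc (0:ℝ) 1 := ⟨hr0, le_trans (le_of_lt hrs) hs1⟩
  have hpsI : ps ∈ Icc (0:ℝ) 1 := ⟨le_trans hr0 hrs.le, hs1⟩
  have hqI : q ∈ Icc (0:ℝ) 1 := ⟨le_trans hr0 hrq, le_trans hqs hs1⟩
  have hq₂I : q₂ ∈ Icc (0:ℝ) 1 := ⟨le_trans hr0 hrq₂, le_trans hq₂s hs1⟩
  -- monotonicity
  have hU1mono : StrictMono U₁ := strictMono_of_deriv_pos hUd1
  have hU2mono : StrictMono U₂ := strictMono_of_deriv_pos hUd2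
  have hh1mono : StrictMonoOn h₁ (Icc 0 1) := by
    apply strictMonoOn_of_deriv_pos (convex_Icc 0 1) hhC1.continuous.continuousOn
    intro x hx; rw [interior_Icc] at hx; exact hhd1 x (Ioo_subset_Icc_self hx)
  have hh2mono : StrictMonoOn h₂ (Icc 0 1) := by
    apply strictMonoOn_of_deriv_pos (convex_Icc 0 1) hhC2.continuous.continuousOn
    intro x hx; rw [interior_Icc] at hx; exact hhd2 x (Ioo_subset_Icc_self hx)
  -- utility differences
  have hA1 : 0 < U₁ x₀ - U₁ (x₀ - ε₁) := sub_pos.mpr (hU1mono (by linarith))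
  have hB1 : 0 < U₁ (x₀ + ε₁) - U₁ x₀ := sub_pos.mpr (hU1mono (by linarith))
  have hA2 : 0 < U₂ x₀ - U₂ (x₀ - ε₁) := sub_pos.mpr (hU2mono (by linarith))
  have hB2 : 0 < U₂ (x₀ + ε₁) - U₂ x₀ := sub_pos.mpr (hU2mono (by linarith))
  -- rearranged first indifference condition
  have hbal1 : (h₁ q - h₁ pr) * (U₁ x₀ - U₁ (x₀ - ε₁))
      = (h₁ ps - h₁ q) * (U₁ (x₀ + ε₁) - U₁ x₀) := by
    linear_combination hF1
  have htot1 : 0 < h₁ ps - h₁ pr := sub_pos.mpr (hh1mono hprI hpsI hrs)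
  have hb1nn : 0 ≤ h₁ ps - h₁ q := sub_nonneg.mpr (hh1mono.monotoneOn hqI hpsI hqs)
  have ha1nn : 0 ≤ h₁ q - h₁ pr := sub_nonneg.mpr (hh1mono.monotoneOn hprI hqI hrq)
  have hb1pos : 0 < h₁ ps - h₁ q := by
    rcases lt_or_eq_of_le hb1nn with h | h
    · exact h
    · exfalso
      have h0 : (h₁ q - h₁ pr) * (U₁ x₀ - U₁ (x₀ - ε₁)) = 0 := by
        rw [hbal1, ← h, zero_mul]
      have ha0 : h₁ q - h₁ pr = 0 := by
        rcases mul_eq_zero.mp h0 with h' | h'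
        · exact h'
        · linarith
      linarith
  have ha1pos : 0 < h₁ q - h₁ pr := by
    by_contra hcon
    push_neg at hcon
    have h0 : h₁ q - h₁ pr = 0 := le_antisymm hcon ha1nn
    have : (0:ℝ) < 0 := by
      calc (0:ℝ) < (h₁ ps - h₁ q) * (U₁ (x₀ + ε₁) - U₁ x₀) := mul_pos hb1pos hB1
        _ = (h₁ q - h₁ pr) * (U₁ x₀ - U₁ (x₀ - ε₁)) := hbal1.symm
        _ = 0 := by rw [h0, zero_mul]
    exact absurd this (lt_irrefl 0)
  -- hence q strictly between pr and ps
  have hrq' : pr < q := by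
    by_contra hcon
    push_neg at hcon
    have := hh1mono.monotoneOn hqI hprI hcon
    linarith
  have hqs' : q < ps := by
    by_contra hcon
    push_neg at hcon
    have := hh1mono.monotoneOn hpsI hqI hcon
    linarith
  -- apply the chord lemma to the utilities
  obtain ⟨kU, hkU, hUl, hUr⟩ := key_chord U₁ U₂ hUC1 hUC2 (x₀ - ε₁) x₀ (x₀ + ε₁)
    (by linarith) (by linarith) (fun x _ => hUd1 x) (fun x _ => hUd2 x)
    (by
      intro x _
      have := hUidx x
      have h1 := hUd1 x; have h2 := hUd2 x
      rw [ge_iff_le, div_le_div_iff₀ h1 h2] at this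
      nlinarith)
  -- apply the chord lemma to the weighting functions
  obtain ⟨kh, hkh, hhl, hhr⟩ := key_chord h₁ h₂ hhC1 hhC2 pr q ps hrq' hqs'
    (fun x hx => hhd1 x ⟨le_trans hr0 hx.1, le_trans hx.2 hs1⟩)
    (fun x hx => hhd2 x ⟨le_trans hr0 hx.1, le_trans hx.2 hs1⟩)
    (by
      intro x hx
      have hxI : x ∈ Ioo (0:ℝ) 1 := ⟨lt_of_le_of_lt hr0 hx.1, lt_of_lt_of_le hx.2 hs1⟩
      have := hhidx x hxI
      have h1 := hhd1 x (Ioo_subset_Icc_self hxI)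
      have h2 := hhd2 x (Ioo_subset_Icc_self hxI)
      rw [ge_iff_le, div_le_div_iff₀ h1 h2] at this
      nlinarith)
  have hb2nn : 0 ≤ h₂ ps - h₂ q := sub_nonneg.mpr (hh2mono.monotoneOn hqI hpsI hqs)
  -- key inequality: player 2 weakly prefers the certain middle at μ₁
  have hkey : (h₂ ps - h₂ q) * (U₂ (x₀ + ε₁) - U₂ x₀)
      ≤ (h₂ q - h₂ pr) * (U₂ x₀ - U₂ (x₀ - ε₁)) :=
    alg_key (h₁ q - h₁ pr) (h₁ ps - h₁ q) (h₂ q - h₂ pr) (h₂ ps - h₂ q)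
      (U₁ x₀ - U₁ (x₀ - ε₁)) (U₁ (x₀ + ε₁) - U₁ x₀)
      (U₂ x₀ - U₂ (x₀ - ε₁)) (U₂ (x₀ + ε₁) - U₂ x₀) kU kh
      hA1 hB1 hkU hkh hbal1 ha1nn hb1nn (by linarith) hhl hhr hb2nn hUl hUr
  -- rearranged second indifference condition
  have hbal2 : (h₂ q₂ - h₂ pr) * (U₂ x₀ - U₂ (x₀ - ε₁))
      = (h₂ ps - h₂ q₂) * (U₂ (x₀ + ε₁) - U₂ x₀) := by
    linear_combination hF2
  -- conclude h₂ q₂ ≤ h₂ q, hence q₂ ≤ q, hence μ₁ ≤ μ₂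
  have hh2cmp : h₂ q₂ - h₂ pr ≤ h₂ q - h₂ pr :=
    alg_final (h₂ q - h₂ pr) (h₂ ps - h₂ q) (h₂ q₂ - h₂ pr) (h₂ ps - h₂ q₂)
      (U₂ x₀ - U₂ (x₀ - ε₁)) (U₂ (x₀ + ε₁) - U₂ x₀)
      hA2 hB2 (by ring) hbal2 hkey
  by_contra hcon
  push_neg at hcon
  have : h₂ q < h₂ q₂ := hh2mono hqI hq₂I (by simp only [hq, hq₂]; linarith)
  linarith
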